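/- Let (V, ω) be a finite dimensional symplectic vector space, W₀ ⊆ V a coisotropic subspace, and (W, Φ) a pair where W ⊆ V is a coisotropic subspace and Φ : W₀/W₀^ω → W/W^ω is a linear symplectic isomorphism between the quotients. Then there exists a linear symplectic automorphism Ψ of (V, ω) such that Ψ W₀ = W and the induced map Ψ_{W₀} : W₀/W₀^ω → W/W^ω equals Φ. -/

import Mathlib

/-- The symplectic complement `W^ω = {v ∈ V | ω(v,w) = 0 for all w ∈ W}`. -/
def symplCompl {V : Type*} [AddCommGroup V] [Module ℝ V]
    (ω : V →ₗ[ℝ] V →ₗ[ℝ] ℝ) (W : Submodule ℝ V) : Submodule ℝ V where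
  carrier := {v | ∀ w ∈ W, ω v w = 0}
  add_mem' := by
    intro a b ha hb w hw
    simp [map_add, LinearMap.add_apply, ha w hw, hb w hw]
  zero_mem' := by
    intro w hw
    simp
  smul_mem' := by
    intro c a ha w hw
    simp [map_smul, LinearMap.smul_apply, ha w hw]

open Module Submodule

section Aux

variable {V : Type*} [AddCommGroup V] [Module ℝ V] [FiniteDimensional ℝ V]
  (ω : V →ₗ[ℝ] V →ₗ[ℝ] ℝ)

omit [FiniteDimensional ℝ V] in
lemma symplSkew (halt : ∀ v : V, ω v v = 0) (x y : V) : ω x y = - ω y x := by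
  have h := halt (x + y)
  simp only [map_add, LinearMap.add_apply] at h
  rw [halt x, halt y] at h
  linarith

omit [FiniteDimensional ℝ V] in
lemma symplCompl_eq_orthogonal (halt : ∀ v : V, ω v v = 0) (A : Submodule ℝ V) :
    symplCompl ω A = LinearMap.BilinForm.orthogonal ω A := by
  ext v
  constructor
  · intro h n hn
    show ω n v = 0
    rw [symplSkew ω halt, h n hn, neg_zero]
  · intro h w hw
    rw [symplSkew ω halt, show ω w v = 0 from h w hw, neg_zero]

lemma finrank_symplCompl (halt : ∀ v : V, ω v v = 0)
    (hnondeg : ∀ v : V, (∀ w : V, ω v w = 0) → v = 0) (A : Submodule ℝ V) :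
    finrank ℝ (symplCompl ω A) = finrank ℝ V - finrank ℝ A := by
  rw [symplCompl_eq_orthogonal ω halt]
  exact LinearMap.BilinForm.finrank_orthogonal ((LinearMap.IsAlt.isRefl halt).nondegenerate_iff_separatingLeft.mpr hnondeg)
    A

/-- Witt-type extension theorem for symplectic forms: any injective isometry from a
subspace extends to a global symplectic automorphism. -/
lemma symplWitt (halt : ∀ v : V, ω v v = 0)
    (hnondeg : ∀ v : V, (∀ w : V, ω v w = 0) → v = 0) :
    ∀ (k : ℕ) (A : Submodule ℝ V) (f : A →ₗ[ℝ] V),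
      finrank ℝ V - finrank ℝ A = k →
      Function.Injective f →
      (∀ x y : A, ω (f x) (f y) = ω (x : V) (y : V)) →
      ∃ Ψ : V ≃ₗ[ℝ] V, (∀ x y : V, ω (Ψ x) (Ψ y) = ω x y) ∧ ∀ a : A, Ψ (a : V) = f a := by
  intro k
  induction k with
  | zero =>
    intro A f hk hinj hiso
    have hle : finrank ℝ A ≤ finrank ℝ V := A.finrank_le
    have htop : A = ⊤ := Submodule.eq_top_of_finrank_eq (by omega)
    subst htop
    set g : V →ₗ[ℝ] V :=
      f.comp (LinearEquiv.ofTop (⊤ : Submodule ℝ V) rfl).symm.toLinearMap with hg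
    have hgval : ∀ x : V, g x = f ((LinearEquiv.ofTop (⊤ : Submodule ℝ V) rfl).symm x) :=
      fun x => rfl
    have hginj : Function.Injective g := by
      rw [hg, LinearMap.coe_comp]
      exact hinj.comp (LinearEquiv.ofTop (⊤ : Submodule ℝ V) rfl).symm.injective
    have hgbij : Function.Bijective g :=
      ⟨hginj, LinearMap.injective_iff_surjective.mp hginj⟩
    refine ⟨LinearEquiv.ofBijective g hgbij, ?_, ?_⟩
    · intro x y
      show ω (g x) (g y) = ω x y
      rw [hgval, hgval, hiso]
      rfl
    · intro a
      rfl
  | succ k ih =>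
    intro A f hk hinj hiso
    have hle : finrank ℝ A ≤ finrank ℝ V := A.finrank_le
    have hlt : finrank ℝ A < finrank ℝ V := by omega
    -- find the extension vectors
    obtain ⟨v, hv, v', hv', hrel⟩ :
        ∃ v, v ∉ A ∧ ∃ v', v' ∉ LinearMap.range f ∧ ∀ a : A, ω v' (f a) = ω v (a : V) := by
      by_cases hdeg : ∃ u : V, u ∈ A ∧ u ≠ 0 ∧ ∀ a ∈ A, ω u a = 0
      · -- degenerate case
        obtain ⟨u, huA, hune, hurad⟩ := hdeg
        obtain ⟨w, hw⟩ : ∃ w, ω u w ≠ 0 := by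
          by_contra h
          push_neg at h
          exact hune (hnondeg u h)
        set v : V := (ω u w)⁻¹ • w with hvdef
        have huv : ω u v = 1 := by
          rw [hvdef, map_smul, smul_eq_mul, inv_mul_cancel₀ hw]
        have hvA : v ∉ A := by
          intro hmem
          rw [hurad v hmem] at huv
          norm_num at huv
        set e : A ≃ₗ[ℝ] LinearMap.range f := LinearEquiv.ofInjective f hinj with hedef
        set χ : (LinearMap.range f) →ₗ[ℝ] ℝ :=
          ((ω v).comp A.subtype).comp e.symm.toLinearMap with hχdef
        obtain ⟨χ', hχ'⟩ := LinearMap.exists_extend χ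
        set v' : V := (LinearMap.BilinForm.toDual ω ((LinearMap.IsAlt.isRefl halt).nondegenerate_iff_separatingLeft.mpr hnondeg)).symm χ' with hv'def
        have hesymm : ∀ a : A, e.symm ⟨f a, LinearMap.mem_range_self f a⟩ = a := by
          intro a
          apply e.injective
          rw [LinearEquiv.apply_symm_apply]
          exact Subtype.ext (LinearEquiv.ofInjective_apply f a).symm
        have hrel : ∀ a : A, ω v' (f a) = ω v (a : V) := by
          intro a
          have h1 : ω v' (f a) = χ' (f a) :=
            LinearMap.BilinForm.apply_toDual_symm_apply χ' (f a)
          have h2 : χ' (f a) = χ ⟨f a, LinearMap.mem_range_self f a⟩ := by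
            have := LinearMap.congr_fun hχ' ⟨f a, LinearMap.mem_range_self f a⟩
            simpa using this
          rw [h1, h2, hχdef]
          simp only [LinearMap.coe_comp, Function.comp_apply, LinearEquiv.coe_toLinearMap,
            Submodule.coe_subtype]
          rw [hesymm a]
        refine ⟨v, hvA, v', ?_, hrel⟩
        intro hmem
        obtain ⟨a₀, ha₀⟩ := hmem
        have h1 : ω v' (f ⟨u, huA⟩) = ω v u := hrel ⟨u, huA⟩
        have h2 : ω v u = -1 := by
          rw [symplSkew ω halt, huv]
        have h3 : ω v' (f ⟨u, huA⟩) = 0 := by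
          rw [← ha₀, hiso a₀ ⟨u, huA⟩]
          rw [symplSkew ω halt, hurad _ a₀.2, neg_zero]
        rw [h1, h2] at h3
        norm_num at h3
      · -- nondegenerate case
        push_neg at hdeg
        have hA0 : ∀ u : V, u ∈ A → (∀ a ∈ A, ω u a = 0) → u = 0 := by
          intro u huA hu
          by_contra hune
          obtain ⟨a, haA, ha⟩ := hdeg u huA hune
          exact ha (hu a haA)
        have hAc : finrank ℝ (symplCompl ω A) = finrank ℝ V - finrank ℝ A :=
          finrank_symplCompl ω halt hnondeg A
        have hAcne : symplCompl ω A ≠ ⊥ := by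
          intro h
          rw [h, finrank_bot] at hAc
          omega
        obtain ⟨v, hvS, hvne⟩ := Submodule.exists_mem_ne_zero_of_ne_bot hAcne
        have hvA : v ∉ A := by
          intro hmem
          exact hvne (hA0 v hmem hvS)
        have hBr : finrank ℝ (LinearMap.range f) = finrank ℝ A :=
          LinearMap.finrank_range_of_inj hinj
        have hBc : finrank ℝ (symplCompl ω (LinearMap.range f))
            = finrank ℝ V - finrank ℝ A := by
          rw [finrank_symplCompl ω halt hnondeg, hBr]
        have hBcne : symplCompl ω (LinearMap.range f) ≠ ⊥ := by
          intro h
          rw [h, finrank_bot] at hBc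
          omega
        obtain ⟨v', hv'S, hv'ne⟩ := Submodule.exists_mem_ne_zero_of_ne_bot hBcne
        have hv'B : v' ∉ LinearMap.range f := by
          intro hmem
          obtain ⟨a₀, ha₀⟩ := hmem
          have : (a₀ : V) = 0 := by
            apply hA0 _ a₀.2
            intro a haA
            have := hiso a₀ ⟨a, haA⟩
            rw [ha₀] at this
            rw [← this]
            exact hv'S (f ⟨a, haA⟩) (LinearMap.mem_range_self f ⟨a, haA⟩)
          apply hv'ne
          rw [← ha₀, show a₀ = 0 from Subtype.ext this, map_zero]
        refine ⟨v, hvA, v', hv'B, fun a => ?_⟩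
        rw [hv'S (f a) (LinearMap.mem_range_self f a), hvS (a : V) a.2]
    -- build the one-step extension as a LinearPMap
    have hvne : v ≠ 0 := fun h => hv (h ▸ A.zero_mem)
    set F : V →ₗ.[ℝ] V := LinearPMap.supSpanSingleton ⟨A, f⟩ v v' hv with hFdef
    have hFdom : F.domain = A ⊔ (ℝ ∙ v) := rfl
    have hmemdom : ∀ (a : V), a ∈ A → ∀ c : ℝ, a + c • v ∈ F.domain := by
      intro a ha c
      rw [hFdom]
      exact Submodule.add_mem_sup ha
        (Submodule.smul_mem _ c (Submodule.mem_span_singleton_self v))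
    have hFval : ∀ (a : V) (ha : a ∈ A) (c : ℝ),
        F.toFun ⟨a + c • v, hmemdom a ha c⟩ = f ⟨a, ha⟩ + c • v' := by
      intro a ha c
      exact LinearPMap.supSpanSingleton_apply_mk ⟨A, f⟩ v v' hv a ha c
    have hdecomp : ∀ z : F.domain, ∃ (a : V) (ha : a ∈ A) (c : ℝ), (z : V) = a + c • v := by
      intro z
      have hz : (z : V) ∈ A ⊔ (ℝ ∙ v) := z.2
      obtain ⟨a, ha, w, hw, hzw⟩ := Submodule.mem_sup.mp hz
      obtain ⟨c, rfl⟩ := Submodule.mem_span_singleton.mp hw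
      exact ⟨a, ha, c, hzw.symm⟩
    have hFinj : Function.Injective F.toFun := by
      rw [injective_iff_map_eq_zero]
      intro z hz
      obtain ⟨a, ha, c, hzc⟩ := hdecomp z
      have hzeq : z = ⟨a + c • v, hmemdom a ha c⟩ := Subtype.ext hzc
      rw [hzeq, hFval a ha c] at hz
      by_cases hc : c = 0
      · subst hc
        rw [zero_smul, add_zero] at hz
        have h0 : (⟨a, ha⟩ : A) = 0 := (injective_iff_map_eq_zero f).mp hinj _ hz
        have ha0 : a = 0 := congrArg Subtype.val h0
        apply Subtype.ext
        rw [hzc, ha0]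
        simp
      · exfalso
        apply hv'
        refine ⟨(-c⁻¹) • ⟨a, ha⟩, ?_⟩
        rw [map_smul]
        have heq : f ⟨a, ha⟩ = -(c • v') := eq_neg_of_add_eq_zero_left hz
        rw [heq, smul_neg, smul_smul, neg_mul, neg_smul, neg_neg,
          inv_mul_cancel₀ hc, one_smul]
    have hFiso : ∀ x y : F.domain, ω (F.toFun x) (F.toFun y) = ω (x : V) (y : V) := by
      intro z z'
      obtain ⟨a, ha, c, hzc⟩ := hdecomp z
      obtain ⟨a', ha', c', hzc'⟩ := hdecomp z'
      have hzeq : z = ⟨a + c • v, hmemdom a ha c⟩ := Subtype.ext hzc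
      have hzeq' : z' = ⟨a' + c' • v, hmemdom a' ha' c'⟩ := Subtype.ext hzc'
      rw [hzeq, hzeq', hFval a ha c, hFval a' ha' c']
      simp only [map_add, map_smul, LinearMap.add_apply, LinearMap.smul_apply, smul_eq_mul]
      have h1 := hrel ⟨a, ha⟩
      have h2 := hrel ⟨a', ha'⟩
      have h3 := hiso ⟨a, ha⟩ ⟨a', ha'⟩
      have h4 := halt v'
      have h5 := halt v
      have h6 := symplSkew ω halt (f ⟨a, ha⟩) v'
      have h7 := symplSkew ω halt a v
      simp only at h1 h2 h3 h6 h7 ⊢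
      linear_combination h3 + c' * h6 - c' * h1 - c' * h7 + c * h2 + c * c' * h4 - c * c' * h5
    -- dimension count
    have hinf : A ⊓ (ℝ ∙ v) = ⊥ := by
      rw [Submodule.eq_bot_iff]
      rintro x ⟨hx1, hx2⟩
      obtain ⟨c, rfl⟩ := Submodule.mem_span_singleton.mp hx2
      by_cases hc : c = 0
      · rw [hc, zero_smul]
      · exfalso
        apply hv
        have hvc : v = c⁻¹ • (c • v) := by
          rw [smul_smul, inv_mul_cancel₀ hc, one_smul]
        rw [hvc]
        exact Submodule.smul_mem _ _ hx1
    have hdim : finrank ℝ F.domain = finrank ℝ A + 1 := by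
      have h := Submodule.finrank_sup_add_finrank_inf_eq A (ℝ ∙ v)
      rw [hinf, finrank_bot, finrank_span_singleton hvne, add_zero] at h
      rw [hFdom, h]
    have hdomle : finrank ℝ F.domain ≤ finrank ℝ V := F.domain.finrank_le
    obtain ⟨Ψ, hΨiso, hΨext⟩ := ih F.domain F.toFun (by omega) hFinj hFiso
    refine ⟨Ψ, hΨiso, fun a => ?_⟩
    have haF : (a : V) ∈ F.domain := by
      rw [hFdom]; exact Submodule.mem_sup_left a.2
    rw [hΨext ⟨a, haF⟩]
    have h0 : ((a : V) + (0 : ℝ) • v) = (a : V) := by simp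
    have hcast : F.toFun ⟨(a : V), haF⟩
        = F.toFun ⟨(a : V) + (0 : ℝ) • v, hmemdom _ a.2 0⟩ := by
      congr 1
      exact Subtype.ext h0.symm
    rw [hcast, hFval _ a.2 0]
    simp

/-- Construction of an injective lift of an isomorphism of quotients, using arbitrary
splittings of the quotient maps and an arbitrary isomorphism of the kernels. -/
lemma quotLift {W₀ W : Submodule ℝ V} (R₀ : Submodule ℝ W₀) (R : Submodule ℝ W)
    (Φ : (W₀ ⧸ R₀) ≃ₗ[ℝ] (W ⧸ R)) (hrr : finrank ℝ R₀ = finrank ℝ R) :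
    ∃ fW : W₀ →ₗ[ℝ] W, Function.Injective fW ∧
      ∀ x : W₀, R.mkQ (fW x) = Φ (R₀.mkQ x) := by
  obtain ⟨σ₀, hσ₀⟩ := R₀.mkQ.exists_rightInverse_of_surjective
    (LinearMap.range_eq_top.2 R₀.mkQ_surjective)
  obtain ⟨σ, hσ⟩ := R.mkQ.exists_rightInverse_of_surjective
    (LinearMap.range_eq_top.2 R.mkQ_surjective)
  obtain ⟨g⟩ := FiniteDimensional.nonempty_linearEquiv_of_finrank_eq hrr
  have hσ₀' : ∀ q, R₀.mkQ (σ₀ q) = q := fun q => LinearMap.congr_fun hσ₀ q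
  have hσ' : ∀ q, R.mkQ (σ q) = q := fun q => LinearMap.congr_fun hσ q
  have hπmem : ∀ x : W₀, x - σ₀ (R₀.mkQ x) ∈ R₀ := by
    intro x
    rw [← Submodule.Quotient.mk_eq_zero, ← Submodule.mkQ_apply, map_sub, hσ₀', sub_self]
  set π : W₀ →ₗ[ℝ] R₀ :=
    (LinearMap.id - σ₀ ∘ₗ R₀.mkQ).codRestrict R₀ (fun x => hπmem x) with hπdef
  have hπ : ∀ x : W₀, ((π x : R₀) : W₀) = x - σ₀ (R₀.mkQ x) := fun x => rfl
  set fW : W₀ →ₗ[ℝ] W :=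
    (σ ∘ₗ Φ.toLinearMap ∘ₗ R₀.mkQ) + (R.subtype ∘ₗ g.toLinearMap ∘ₗ π) with hfWdef
  have hfWval : ∀ x : W₀, fW x = σ (Φ (R₀.mkQ x)) + ((g (π x) : R) : W) := fun x => rfl
  have hmkfW : ∀ x : W₀, R.mkQ (fW x) = Φ (R₀.mkQ x) := by
    intro x
    rw [hfWval, map_add, hσ']
    have h0 : R.mkQ ((g (π x) : W)) = 0 := by
      rw [Submodule.mkQ_apply, Submodule.Quotient.mk_eq_zero]
      exact (g (π x)).2
    rw [h0, add_zero]
  refine ⟨fW, ?_, hmkfW⟩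
  rw [injective_iff_map_eq_zero]
  intro x hx
  have h1 : Φ (R₀.mkQ x) = 0 := by rw [← hmkfW, hx, map_zero]
  have h2 : R₀.mkQ x = 0 := Φ.map_eq_zero_iff.mp h1
  have h3 : ((g (π x) : R) : W) = 0 := by
    have h := hfWval x
    rw [hx, h2, map_zero, map_zero, zero_add] at h
    exact h.symm
  have h4 : π x = 0 := g.map_eq_zero_iff.mp (Subtype.ext h3)
  have h5 := hπ x
  rw [h4, h2, map_zero] at h5
  have h6 : (0 : W₀) = x - 0 := h5
  simpa using h6.symm

end Aux

/-- Transitivity of the symplectic group action on the framed coisotropic Grassmannian: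
given coisotropic subspaces `W₀, W` of a finite dimensional symplectic vector space
`(V, ω)` and a linear symplectic isomorphism `Φ` between the symplectic quotients
`W₀/W₀^ω → W/W^ω`, there is a linear symplectic automorphism `Ψ` of `(V, ω)` with
`Ψ W₀ = W` inducing `Φ` on the quotients. -/
theorem stmt5 {V : Type*} [AddCommGroup V] [Module ℝ V] [FiniteDimensional ℝ V]
    (ω : V →ₗ[ℝ] V →ₗ[ℝ] ℝ)
    (halt : ∀ v : V, ω v v = 0)
    (hnondeg : ∀ v : V, (∀ w : V, ω v w = 0) → v = 0)
    (W₀ W : Submodule ℝ V)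
    (hW₀ : symplCompl ω W₀ ≤ W₀) (hW : symplCompl ω W ≤ W)
    (Φ : (W₀ ⧸ (symplCompl ω W₀).comap W₀.subtype) ≃ₗ[ℝ]
         (W ⧸ (symplCompl ω W).comap W.subtype))
    (hΦ : ∀ (x x' : W₀) (y y' : W),
      Φ (Submodule.Quotient.mk x) = Submodule.Quotient.mk y →
      Φ (Submodule.Quotient.mk x') = Submodule.Quotient.mk y' →
      ω (y : V) (y' : V) = ω (x : V) (x' : V)) :
    ∃ Ψ : V ≃ₗ[ℝ] V,
      (∀ x y : V, ω (Ψ x) (Ψ y) = ω x y) ∧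
      Submodule.map (Ψ : V →ₗ[ℝ] V) W₀ = W ∧
      ∀ (x : W₀) (y : W), (y : V) = Ψ x →
        Φ (Submodule.Quotient.mk x) = Submodule.Quotient.mk y := by
  classical
  -- dimension bookkeeping
  have hr₀ : finrank ℝ ((symplCompl ω W₀).comap W₀.subtype)
      = finrank ℝ V - finrank ℝ W₀ := by
    rw [LinearEquiv.finrank_eq (Submodule.comapSubtypeEquivOfLe hW₀),
      finrank_symplCompl ω halt hnondeg]
  have hr : finrank ℝ ((symplCompl ω W).comap W.subtype)
      = finrank ℝ V - finrank ℝ W := by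
    rw [LinearEquiv.finrank_eq (Submodule.comapSubtypeEquivOfLe hW),
      finrank_symplCompl ω halt hnondeg]
  have hq₀ : finrank ℝ (W₀ ⧸ (symplCompl ω W₀).comap W₀.subtype)
      + finrank ℝ ((symplCompl ω W₀).comap W₀.subtype) = finrank ℝ W₀ :=
    Submodule.finrank_quotient_add_finrank _
  have hq : finrank ℝ (W ⧸ (symplCompl ω W).comap W.subtype)
      + finrank ℝ ((symplCompl ω W).comap W.subtype) = finrank ℝ W :=
    Submodule.finrank_quotient_add_finrank _
  have hQ : finrank ℝ (W₀ ⧸ (symplCompl ω W₀).comap W₀.subtype)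
      = finrank ℝ (W ⧸ (symplCompl ω W).comap W.subtype) := LinearEquiv.finrank_eq Φ
  have hW₀le : finrank ℝ W₀ ≤ finrank ℝ V := W₀.finrank_le
  have hWle : finrank ℝ W ≤ finrank ℝ V := W.finrank_le
  have hco₀ : finrank ℝ ((symplCompl ω W₀).comap W₀.subtype) ≤ finrank ℝ W₀ := by
    rw [LinearEquiv.finrank_eq (Submodule.comapSubtypeEquivOfLe hW₀)]
    exact Submodule.finrank_mono hW₀
  have hco : finrank ℝ ((symplCompl ω W).comap W.subtype) ≤ finrank ℝ W := by
    rw [LinearEquiv.finrank_eq (Submodule.comapSubtypeEquivOfLe hW)]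
    exact Submodule.finrank_mono hW
  have hWW₀ : finrank ℝ W₀ = finrank ℝ W := by omega
  have hrr : finrank ℝ ((symplCompl ω W₀).comap W₀.subtype)
      = finrank ℝ ((symplCompl ω W).comap W.subtype) := by omega
  -- the lift of Φ
  obtain ⟨fW, hfWinj, hmkfW⟩ := quotLift _ _ Φ hrr
  set f : W₀ →ₗ[ℝ] V := W.subtype ∘ₗ fW with hfdef
  have hfval : ∀ x : W₀, f x = ((fW x : W) : V) := fun x => rfl
  have hfinj : Function.Injective f := by
    rw [hfdef, LinearMap.coe_comp]
    exact W.injective_subtype.comp hfWinj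
  have hΦmk : ∀ x : W₀, Φ (Submodule.Quotient.mk x) = Submodule.Quotient.mk (fW x) := by
    intro x
    rw [← Submodule.mkQ_apply, ← Submodule.mkQ_apply, hmkfW]
  have hfiso : ∀ x y : W₀, ω (f x) (f y) = ω (x : V) (y : V) := by
    intro x y
    rw [hfval, hfval]
    exact hΦ x y (fW x) (fW y) (hΦmk x) (hΦmk y)
  obtain ⟨Ψ, hΨiso, hΨext⟩ := symplWitt ω halt hnondeg
    (finrank ℝ V - finrank ℝ W₀) W₀ f rfl hfinj hfiso
  have hΨval : ∀ x : W₀, Ψ (x : V) = ((fW x : W) : V) := by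
    intro x
    rw [hΨext x, hfval]
  refine ⟨Ψ, hΨiso, ?_, ?_⟩
  · have hle : Submodule.map (Ψ : V →ₗ[ℝ] V) W₀ ≤ W := by
      rintro _ ⟨x, hx, rfl⟩
      show Ψ x ∈ W
      rw [show Ψ x = Ψ ((⟨x, hx⟩ : W₀) : V) from rfl, hΨval ⟨x, hx⟩]
      exact (fW ⟨x, hx⟩).2
    apply Submodule.eq_of_le_of_finrank_le hle
    rw [LinearEquiv.finrank_map_eq Ψ W₀]
    omega
  · intro x y hxy
    have hy : y = fW x := Subtype.ext (by rw [hxy, hΨval])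
    rw [hy, hΦmk]
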